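/- arXiv:1008.2728 — 3 statements merged into one kernel-verified Lean document; each statement's English description precedes it below -/
import Mathlib

section
/- In the polynomial ring F[d] over a commutative ring F, let M_d denote multiplication by d and D_d differentiation with respect to d, as linear operators. Then for all natural numbers m, n: D_d^m ∘ M_d^n = Σ_{i=0}^{min(m,n)} i! · C(m,i) · C(n,i) · M_d^{n−i} ∘ D_d^{m−i}, where C denotes the binomial coefficient. -/
noncomputable def Md (F : Type*) [CommRing F] : Module.End F (Polynomial F) :=
  LinearMap.mulLeft F Polynomial.X

noncomputable def Dd (F : Type*) [CommRing F] : Module.End F (Polynomial F) :=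
  Polynomial.derivative

lemma base (F : Type*) [CommRing F] : Dd F * Md F = Md F * Dd F + 1 := by
  apply LinearMap.ext
  intro p
  simp [Dd, Md, Polynomial.derivative_mul, mul_comm, add_comm]

lemma commDM' (F : Type*) [CommRing F] (k : ℕ) :
    Dd F ^ (k+1) * Md F = Md F * Dd F ^ (k+1) + (k+1) • Dd F ^ k := by
  induction k with
  | zero => simpa using base F
  | succ k ih =>
    have h : Dd F ^ (k+2) * Md F = Dd F * (Dd F ^ (k+1) * Md F) := by
      rw [← mul_assoc, ← pow_succ']
    rw [h, ih, mul_add, ← mul_assoc, base F, mul_smul_comm, add_mul, one_mul,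
      mul_assoc, ← pow_succ', ← pow_succ']
    rw [add_assoc]
    congr 1
    simp [succ_nsmul, add_comm, add_mul]

lemma commDM (F : Type*) [CommRing F] (k : ℕ) :
    Dd F ^ k * Md F = Md F * Dd F ^ k + k • Dd F ^ (k-1) := by
  cases k with
  | zero => simp
  | succ k => simpa using commDM' F k

lemma arith (m n j : ℕ) :
    (j+1).factorial * m.choose (j+1) * n.choose (j+1)
      + j.factorial * m.choose j * n.choose j * (m - j)
    = (j+1).factorial * m.choose (j+1) * (n+1).choose (j+1) := by
  have key : j.factorial * m.choose j * (m - j) = (j+1).factorial * m.choose (j+1) := by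
    rw [Nat.factorial_succ, mul_assoc, ← Nat.choose_succ_right_eq]; ring
  have h2 : j.factorial * m.choose j * n.choose j * (m-j)
      = (j+1).factorial * m.choose (j+1) * n.choose j := by
    rw [← key]; ring
  rw [Nat.choose_succ_succ, Nat.mul_add, h2]
  ring

lemma key (F : Type*) [CommRing F] (m n : ℕ) :
    (Dd F) ^ m * (Md F) ^ n =
      ∑ i ∈ Finset.range (m + 1),
        (i.factorial * m.choose i * n.choose i) •
          ((Md F) ^ (n - i) * (Dd F) ^ (m - i)) := by
  induction n with
  | zero =>
    rw [Finset.sum_eq_single 0]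
    · simp
    · intro i hi hne
      have : (0:ℕ) < i := Nat.pos_of_ne_zero hne
      simp [Nat.choose_eq_zero_of_lt this]
    · intro h; simp at h
  | succ n ih =>
    have h1 : (Dd F)^m * (Md F)^(n+1) = ((Dd F)^m * (Md F)^n) * Md F := by
      rw [pow_succ, mul_assoc]
    rw [h1, ih, Finset.sum_mul]
    have expand : ∀ i ∈ Finset.range (m+1),
        ((i.factorial * m.choose i * n.choose i) • ((Md F)^(n-i) * (Dd F)^(m-i))) * Md F
        = (i.factorial * m.choose i * n.choose i) • ((Md F)^(n+1-i) * (Dd F)^(m-i))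
          + ((i.factorial * m.choose i * n.choose i) * (m-i)) •
              ((Md F)^(n-i) * (Dd F)^(m-1-i)) := by
      intro i hi
      rw [smul_mul_assoc, mul_assoc (Md F ^ (n-i)), commDM F (m-i), mul_add, mul_smul_comm, smul_add,
        smul_smul, ← mul_assoc, ← pow_succ, Nat.sub_right_comm]
      rcases le_or_gt i n with h | h
      · rw [Nat.sub_add_comm h]
      · have : n.choose i = 0 := Nat.choose_eq_zero_of_lt h
        simp [this]
    rw [Finset.sum_congr rfl expand, Finset.sum_add_distrib]
    rw [Finset.sum_range_succ'] -- peel i=0 from first sum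
    rw [Finset.sum_range_succ]  -- peel i=m from second sum
    rw [Finset.sum_range_succ'] -- peel i=0 from RHS
    simp only [Nat.sub_self, Nat.mul_zero, zero_smul, add_zero, Nat.choose_zero_right,
      Nat.factorial_zero, Nat.mul_one, one_mul, one_smul, Nat.sub_zero]
    rw [add_right_comm, ← Finset.sum_add_distrib]
    congr 1
    apply Finset.sum_congr rfl
    intro j hj
    have e1 : n + 1 - (j + 1) = n - j := by omega
    have e2 : m - (j + 1) = m - 1 - j := by omega
    rw [e1, e2, ← add_smul, arith]

/-- In `F[d]` over a commutative ring `F`: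
`D_d^m ∘ M_d^n = Σ_{i=0}^{min(m,n)} i! C(m,i) C(n,i) M_d^{n-i} ∘ D_d^{m-i}`. -/
theorem stmt1 (F : Type*) [CommRing F] (m n : ℕ) :
    (Dd F) ^ m * (Md F) ^ n =
      ∑ i ∈ Finset.range (min m n + 1),
        (i.factorial * m.choose i * n.choose i) •
          ((Md F) ^ (n - i) * (Dd F) ^ (m - i)) := by
  rw [key]
  refine (Finset.sum_subset (Finset.range_subset_range.2 (by omega)) ?_).symm
  intro i hi hni
  simp only [Finset.mem_range] at hi hni
  have : n < i := by omega
  simp [Nat.choose_eq_zero_of_lt this]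
end

section
/- Let A be an alternative algebra over a field of characteristic ≠ 2 (i.e., (x,x,y) = 0 and (y,x,x) = 0 for all x,y, where (x,y,z) = (xy)z − x(yz)). Then the commutator algebra A^−, with bracket [x,y] = xy − yx, satisfies the Malcev identity: [J(x,y,z), x] = J(x, y, [x,z]) for all x, y, z, where J(x,y,z) = [[x,y],z] + [[y,z],x] + [[z,x],y]. -/
/-- The commutator bracket `[x,y] = xy − yx`. -/
def br {A : Type*} [Mul A] [Sub A] (x y : A) : A := x * y - y * x

/-- The Jacobian `J(x,y,z) = [[x,y],z] + [[y,z],x] + [[z,x],y]`. -/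
def Jac {A : Type*} [Mul A] [Sub A] [Add A] (x y z : A) : A :=
  br (br x y) z + br (br y z) x + br (br z x) y

/-- If `A` is an alternative algebra over a field of characteristic `≠ 2`, then
the commutator algebra `A⁻` satisfies the Malcev identity
`[J(x,y,z),x] = J(x,y,[x,z])`. -/
theorem stmt5 (F : Type*) [Field F] (h2 : ringChar F ≠ 2)
    (A : Type*) [NonUnitalNonAssocRing A] [Module F A]
    [SMulCommClass F A A] [IsScalarTower F A A]
    (alt1 : ∀ x y : A, (x * x) * y = x * (x * y))
    (alt2 : ∀ x y : A, (y * x) * x = y * (x * x))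
    (x y z : A) :
    br (Jac x y z) x = Jac x y (br x z) := by
  have L1 : ∀ a b c : A, (a * b) * c + (b * a) * c = a * (b * c) + b * (a * c) := by
    intro a b c
    have h := alt1 (a + b) c
    simp only [add_mul, mul_add, alt1] at h
    linear_combination (norm := abel1) h
  have L2 : ∀ a b c : A, (a * b) * c + (a * c) * b = a * (b * c) + a * (c * b) := by
    intro a b c
    have h := alt2 (b + c) a
    simp only [add_mul, mul_add, alt2] at h
    linear_combination (norm := abel1) h
  have htwo : (2 : F) ≠ 0 := by
    intro h
    exact h2 (CharP.ringChar_of_prime_eq_zero Nat.prime_two h)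
  apply smul_right_injective A htwo
  show (2 : F) • br (Jac x y z) x = (2 : F) • Jac x y (br x z)
  have R26 : z * ((x * x) * y) + z * ((x * x) * y) = z * (x * (x * y)) + z * (x * (x * y)) := by rw [← mul_add, L1 x x y, mul_add]
  have R27 : ((x * x) * y) * z + ((x * x) * y) * z = (x * (x * y)) * z + (x * (x * y)) * z := by rw [← add_mul, L1 x x y, add_mul]
  have R28 : z * ((x * x) * y) + z * ((x * y) * x) = z * (x * (x * y)) + z * (x * (y * x)) := by rw [← mul_add, L2 x x y, mul_add]
  have R29 : ((x * x) * y) * z + ((x * y) * x) * z = (x * (x * y)) * z + (x * (y * x)) * z := by rw [← add_mul, L2 x x y, add_mul]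
  have R30 : y * ((x * x) * z) + y * ((x * x) * z) = y * (x * (x * z)) + y * (x * (x * z)) := by rw [← mul_add, L1 x x z, mul_add]
  have R31 : ((x * x) * z) * y + ((x * x) * z) * y = (x * (x * z)) * y + (x * (x * z)) * y := by rw [← add_mul, L1 x x z, add_mul]
  have R32 : y * ((x * x) * z) + y * ((x * z) * x) = y * (x * (x * z)) + y * (x * (z * x)) := by rw [← mul_add, L2 x x z, mul_add]
  have R33 : ((x * x) * z) * y + ((x * z) * x) * y = (x * (x * z)) * y + (x * (z * x)) * y := by rw [← add_mul, L2 x x z, add_mul]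
  have R34 : z * ((x * y) * x) + z * ((y * x) * x) = z * (x * (y * x)) + z * (y * (x * x)) := by rw [← mul_add, L1 x y x, mul_add]
  have R35 : ((x * y) * x) * z + ((y * x) * x) * z = (x * (y * x)) * z + (y * (x * x)) * z := by rw [← add_mul, L1 x y x, add_mul]
  have R36 : x * ((x * y) * z) + x * ((y * x) * z) = x * (x * (y * z)) + x * (y * (x * z)) := by rw [← mul_add, L1 x y z, mul_add]
  have R37 : ((x * y) * z) * x + ((y * x) * z) * x = (x * (y * z)) * x + (y * (x * z)) * x := by rw [← add_mul, L1 x y z, add_mul]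
  have R38 : ((x * y) * z) * x + ((x * z) * y) * x = (x * (y * z)) * x + (x * (z * y)) * x := by rw [← add_mul, L2 x y z, add_mul]
  have R39 : y * ((x * z) * x) + y * ((z * x) * x) = y * (x * (z * x)) + y * (z * (x * x)) := by rw [← mul_add, L1 x z x, mul_add]
  have R40 : ((x * z) * x) * y + ((z * x) * x) * y = (x * (z * x)) * y + (z * (x * x)) * y := by rw [← add_mul, L1 x z x, add_mul]
  simp only [br, Jac, mul_add, add_mul, mul_sub, sub_mul]
  linear_combination (norm := module)
      ((-4 : F)) • (L1 x x (y * z)) +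
      ((1 : F)) • (L1 x x (z * y)) +
      ((-10 : F)) • (L1 x y (x * z)) +
      ((4 : F)) • (L2 x y (x * z)) +
      ((-12 : F)) • (L1 x y (z * x)) +
      ((12 : F)) • (L2 x y (z * x)) +
      ((-14 : F)) • (L1 x z (x * y)) +
      ((12 : F)) • (L2 x z (x * y)) +
      ((-10 : F)) • (L1 x z (y * x)) +
      ((12 : F)) • (L2 x z (y * x)) +
      ((-4 : F)) • (L1 x (x * y) z) +
      ((-4 : F)) • (L1 x (x * z) y) +
      ((-8 : F)) • (L1 x (y * x) z) +
      ((2 : F)) • (L1 x (y * z) x) +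
      ((-12 : F)) • (L1 x (z * x) y) +
      ((-2 : F)) • (L1 x (z * y) x) +
      ((4 : F)) • (L2 y x (x * z)) +
      ((-14 : F)) • (L1 y z (x * x)) +
      ((16 : F)) • (L2 y z (x * x)) +
      ((-8 : F)) • (L1 y (x * x) z) +
      ((4 : F)) • (L1 y (x * z) x) +
      ((12 : F)) • (L2 z x (y * x)) +
      ((12 : F)) • (L2 z y (x * x)) +
      ((2 : F)) • (L1 z (x * x) y) +
      ((-2 : F)) • (L1 z (x * y) x) +
      ((-10 : F)) • (L1 z (y * x) x) +
      ((9 : F)) • (R26) +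
      ((6 : F)) • (R27) +
      ((-4 : F)) • (R28) +
      ((-4 : F)) • (R29) +
      ((-2 : F)) • (R30) +
      ((5 : F)) • (R31) +
      ((12 : F)) • (R32) +
      ((-12 : F)) • (R33) +
      ((2 : F)) • (R34) +
      ((8 : F)) • (R35) +
      ((6 : F)) • (R36) +
      ((8 : F)) • (R37) +
      ((-4 : F)) • (R38) +
      ((-2 : F)) • (R39) +
      ((14 : F)) • (R40)
end

section
/- Let F be a field of characteristic ≠ 2,3 and let A be the F-algebra with basis { a^i b^j c^k d^ℓ : i,j,k,ℓ ≥ 0 } ∪ { a^i b^j d^ℓ e : i,j,ℓ ≥ 0 } (monomials of 'type 2' and 'type 1' respectively), and multiplication defined by: (type 1)·(type 1) = 0; (a^i b^j c^k d^ℓ)·(a^p b^q d^s e) = δ_{k,0} a^{i+p} b^{j+q} d^{ℓ+s} e; (a^i b^j d^ℓ e)·(a^p b^q c^r d^s) = δ_{r,0} a^{i+p} b^{j+q} d^{ℓ+s} e; and (a^i b^j c^k d^ℓ)·(a^p b^q c^r d^s) = Σ_{μ=0}^{j} (−1)^μ μ! C(j,μ) C(p,μ) a^{i+p−μ} b^{j+q−μ}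 c^{k+r+μ} d^{ℓ+s} + δ_{k,0} δ_{r,0} (ijs/6 − iℓq/6 + jℓp/2 + jps/3 − ℓpq/3) a^{i+p−1} b^{j+q−1} d^{ℓ+s−1} e − δ_{k,0} δ_{r,1} ℓ a^{i+p} b^{j+q} d^{ℓ+s−1} e. Then the associator of three type-2 basis monomials in A equals: (a^i b^j c^k d^ℓ, a^p b^q c^r d^s, a^v b^w c^x d^y) = δ_{k,0} δ_{r,0} δ_{x,0} (1/6)(iqy − isw − jpy + jsv + ℓpw − ℓqv) a^{i+p+v−1} b^{j+q+w−1} d^{ℓ+s+y−1} e. -/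
open Finset

/-- Index type for the monomial basis of the universal alternative enveloping
algebra `A(𝕄)`: type-2 monomials `aⁱ bʲ cᵏ dˡ` (`Sum.inl (i,j,k,l)`) and
type-1 monomials `aⁱ bʲ dˡ e` (`Sum.inr (i,j,l)`). -/
abbrev Mon : Type := (ℕ × ℕ × ℕ × ℕ) ⊕ (ℕ × ℕ × ℕ)

variable (F : Type*) [Field F]

/-- The type-2 basis monomial `aⁱ bʲ cᵏ dˡ`. -/
noncomputable def t2 (i j k l : ℕ) : Mon →₀ F :=
  Finsupp.single (Sum.inl (i, j, k, l)) 1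

/-- The type-1 basis monomial `aⁱ bʲ dˡ e`. -/
noncomputable def t1 (i j l : ℕ) : Mon →₀ F :=
  Finsupp.single (Sum.inr (i, j, l)) 1

/-- Product of two basis monomials, given by the structure constants of the
theorem "Alternative structure constants". -/
noncomputable def mulMon : Mon → Mon → (Mon →₀ F)
  | Sum.inr _, Sum.inr _ => 0
  | Sum.inl (i, j, k, l), Sum.inr (p, q, s) =>
      if k = 0 then t1 F (i + p) (j + q) (l + s) else 0
  | Sum.inr (i, j, l), Sum.inl (p, q, r, s) =>
      if r = 0 then t1 F (i + p) (j + q) (l + s) else 0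
  | Sum.inl (i, j, k, l), Sum.inl (p, q, r, s) =>
      (∑ μ ∈ range (j + 1),
        ((-1 : F) ^ μ * μ.factorial * j.choose μ * p.choose μ) •
          t2 F (i + p - μ) (j + q - μ) (k + r + μ) (l + s))
      + (if k = 0 ∧ r = 0 then
          ((i : F) * j * s / 6 - (i : F) * l * q / 6 + (j : F) * l * p / 2
            + (j : F) * p * s / 3 - (l : F) * p * q / 3) •
            t1 F (i + p - 1) (j + q - 1) (l + s - 1)
         else 0)
      - (if k = 0 ∧ r = 1 then
          (l : F) • t1 F (i + p) (j + q) (l + s - 1)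
         else 0)

/-- The bilinear multiplication of `A(𝕄)`. -/
noncomputable def mulA (x y : Mon →₀ F) : Mon →₀ F :=
  x.sum fun mx cx => y.sum fun my cy => (cx * cy) • mulMon F mx my

/-- The associator `(x,y,z) = (xy)z − x(yz)` in `A(𝕄)`. -/
noncomputable def assocA (x y z : Mon →₀ F) : Mon →₀ F :=
  mulA F (mulA F x y) z - mulA F x (mulA F y z)


lemma descFactorial_add' (n a b : ℕ) :
    n.descFactorial (a + b) = n.descFactorial a * (n - a).descFactorial b := by
  induction b with
  | zero => simp
  | succ b ih =>
      rw [show a + (b+1) = (a+b) + 1 by omega, Nat.descFactorial_succ, ih,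
        Nat.descFactorial_succ, Nat.sub_sub]
      ring

lemma add_choose_eq' (m n k : ℕ) :
    (m+n).choose k = ∑ a ∈ range (k+1), m.choose a * n.choose (k-a) := by
  rw [Nat.add_choose_eq, Finset.Nat.sum_antidiagonal_eq_sum_range_succ_mk]

lemma descFactorial_add_eq (m n k : ℕ) :
    (m+n).descFactorial k
      = ∑ a ∈ range (k+1), k.choose a * (m.descFactorial a * n.descFactorial (k-a)) := by
  rw [Nat.descFactorial_eq_factorial_mul_choose, add_choose_eq', Finset.mul_sum]
  refine sum_congr rfl fun a ha => ?_
  rw [mem_range, Nat.lt_succ_iff] at ha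
  rw [Nat.descFactorial_eq_factorial_mul_choose, Nat.descFactorial_eq_factorial_mul_choose,
    ← Nat.choose_mul_factorial_mul_factorial ha]
  ring

lemma choose_sub_mul (j a b : ℕ) :
    j.choose a * (j-a).choose b = j.choose (a+b) * (a+b).choose a := by
  by_cases h : a + b ≤ j
  · simpa using (Nat.choose_mul (n := j) (k := a+b) (s := a) (Nat.le_add_right a b)).symm
  · push_neg at h
    rw [Nat.choose_eq_zero_of_lt h, Nat.zero_mul]
    by_cases ha : a ≤ j
    · have hb : j - a < b := by omega
      rw [Nat.choose_eq_zero_of_lt hb, Nat.mul_zero]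
    · have hb : j < a := by omega
      rw [Nat.choose_eq_zero_of_lt hb, Nat.zero_mul]

lemma desc_swap (v b c : ℕ) :
    v.descFactorial b * (v-b).descFactorial c
      = v.descFactorial c * (v-c).descFactorial b := by
  rw [← descFactorial_add', ← descFactorial_add', Nat.add_comm]

lemma keyNat (j p q v t : ℕ) :
    (∑ μ ∈ range (t+1),
        j.choose μ * p.descFactorial μ * ((j+q-μ).choose (t-μ) * v.descFactorial (t-μ)))
  = ∑ μ ∈ range (t+1),
        j.choose μ * (p+v-(t-μ)).descFactorial μ * (q.choose (t-μ) * v.descFactorial (t-μ)) := by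
  have hL : (∑ μ ∈ range (t+1),
        j.choose μ * p.descFactorial μ * ((j+q-μ).choose (t-μ) * v.descFactorial (t-μ)))
      = ∑ a ∈ range (t+1), ∑ b ∈ range (t+1-a),
          j.choose a * p.descFactorial a *
            ((j-a).choose b * q.choose (t-a-b) *
              (v.descFactorial b * (v-b).descFactorial (t-a-b))) := by
    refine sum_congr rfl fun μ hμ => ?_
    rw [mem_range, Nat.lt_succ_iff] at hμ
    by_cases hj : μ ≤ j
    · rw [show j+q-μ = (j-μ)+q by omega, add_choose_eq', show t-μ+1 = t+1-μ by omega]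
      simp only [Finset.mul_sum, Finset.sum_mul]
      refine sum_congr rfl fun b hb => ?_
      rw [mem_range] at hb
      have e1 : v.descFactorial (t-μ)
          = v.descFactorial b * (v-b).descFactorial (t-μ-b) := by
        rw [← descFactorial_add']
        congr 1
        omega
      rw [e1]
    · have h0 : j.choose μ = 0 := Nat.choose_eq_zero_of_lt (by omega)
      simp [h0]
  have hR : (∑ μ ∈ range (t+1),
        j.choose μ * (p+v-(t-μ)).descFactorial μ * (q.choose (t-μ) * v.descFactorial (t-μ)))
      = ∑ m ∈ range (t+1), ∑ a ∈ range (m+1),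
          j.choose (a+(m-a)) *
            ((a+(m-a)).choose a * p.descFactorial a *
              (v-(t-(a+(m-a)))).descFactorial (m-a)) *
            (q.choose (t-(a+(m-a))) * v.descFactorial (t-(a+(m-a)))) := by
    refine sum_congr rfl fun m hm => ?_
    rw [mem_range, Nat.lt_succ_iff] at hm
    have hcongr : ∀ a ∈ range (m+1),
        j.choose (a+(m-a)) *
            ((a+(m-a)).choose a * p.descFactorial a *
              (v-(t-(a+(m-a)))).descFactorial (m-a)) *
            (q.choose (t-(a+(m-a))) * v.descFactorial (t-(a+(m-a))))
          = j.choose m *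
            (m.choose a * p.descFactorial a * (v-(t-m)).descFactorial (m-a)) *
            (q.choose (t-m) * v.descFactorial (t-m)) := by
      intro a ha
      rw [mem_range, Nat.lt_succ_iff] at ha
      rw [show a+(m-a) = m by omega]
    rw [sum_congr rfl hcongr]
    by_cases hv : t - m ≤ v
    · rw [show p+v-(t-m) = p + (v - (t-m)) by omega, descFactorial_add_eq]
      simp only [Finset.mul_sum, Finset.sum_mul]
      exact sum_congr rfl fun a ha => by ring
    · have h0 : v.descFactorial (t-m) = 0 := by
        rw [Nat.descFactorial_eq_zero_iff_lt]
        omega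
      simp [h0]
  rw [hL, hR, Finset.sum_range_diag_flip (t+1) (fun a b =>
      j.choose (a+b) *
        ((a+b).choose a * p.descFactorial a * (v-(t-(a+b))).descFactorial b) *
        (q.choose (t-(a+b)) * v.descFactorial (t-(a+b))))]
  refine sum_congr rfl fun a ha => sum_congr rfl fun b hb => ?_
  have e1 : j.choose a * (j-a).choose b = j.choose (a+b) * (a+b).choose a :=
    choose_sub_mul j a b
  have e2 : v.descFactorial b * (v-b).descFactorial (t-a-b)
      = v.descFactorial (t-a-b) * (v-(t-a-b)).descFactorial b := desc_swap v b (t-a-b)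
  rw [show t-(a+b) = t-a-b from by omega]
  calc j.choose a * p.descFactorial a *
        ((j-a).choose b * q.choose (t-a-b) *
          (v.descFactorial b * (v-b).descFactorial (t-a-b)))
      = (j.choose a * (j-a).choose b) *
          (v.descFactorial b * (v-b).descFactorial (t-a-b)) *
          (p.descFactorial a * q.choose (t-a-b)) := by ring
    _ = (j.choose (a+b) * (a+b).choose a) *
          (v.descFactorial (t-a-b) * (v-(t-a-b)).descFactorial b) *
          (p.descFactorial a * q.choose (t-a-b)) := by rw [e1, e2]
    _ = j.choose (a+b) *
          ((a+b).choose a * p.descFactorial a * (v-(t-a-b)).descFactorial b) *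
          (q.choose (t-a-b) * v.descFactorial (t-a-b)) := by ring

noncomputable def rmul (n : Mon) : (Mon →₀ F) →ₗ[F] (Mon →₀ F) :=
  Finsupp.lsum F fun m => LinearMap.toSpanSingleton F (Mon →₀ F) (mulMon F m n)

noncomputable def lmul (m : Mon) : (Mon →₀ F) →ₗ[F] (Mon →₀ F) :=
  Finsupp.lsum F fun n => LinearMap.toSpanSingleton F (Mon →₀ F) (mulMon F m n)

lemma rmul_single (n m : Mon) (c : F) :
    rmul F n (Finsupp.single m c) = c • mulMon F m n := by
  simp [rmul]

lemma lmul_single (m n : Mon) (c : F) :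
    lmul F m (Finsupp.single n c) = c • mulMon F m n := by
  simp [lmul]

lemma mulA_single_right (x : Mon →₀ F) (n : Mon) :
    mulA F x (Finsupp.single n (1:F)) = rmul F n x := by
  rw [mulA, rmul, Finsupp.lsum_apply]
  refine Finsupp.sum_congr fun m _ => ?_
  rw [Finsupp.sum_single_index (by simp)]
  simp

lemma mulA_single_left (m : Mon) (y : Mon →₀ F) :
    mulA F (Finsupp.single m (1:F)) y = lmul F m y := by
  rw [mulA, Finsupp.sum_single_index (by simp), lmul, Finsupp.lsum_apply]
  exact Finsupp.sum_congr fun n _ => by simp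

lemma mulA_single_single (m n : Mon) :
    mulA F (Finsupp.single m (1:F)) (Finsupp.single n 1) = mulMon F m n := by
  rw [mulA_single_right, rmul_single, one_smul]

lemma rmul_t2 (n : Mon) (a b c d : ℕ) :
    rmul F n (t2 F a b c d) = mulMon F (Sum.inl (a,b,c,d)) n := by
  rw [t2, rmul_single, one_smul]

lemma rmul_t1 (n : Mon) (a b c : ℕ) :
    rmul F n (t1 F a b c) = mulMon F (Sum.inr (a,b,c)) n := by
  rw [t1, rmul_single, one_smul]

lemma lmul_t2 (m : Mon) (a b c d : ℕ) :
    lmul F m (t2 F a b c d) = mulMon F m (Sum.inl (a,b,c,d)) := by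
  rw [t2, lmul_single, one_smul]

lemma lmul_t1 (m : Mon) (a b c : ℕ) :
    lmul F m (t1 F a b c) = mulMon F m (Sum.inr (a,b,c)) := by
  rw [t1, lmul_single, one_smul]
lemma t2assoc (i j k l p q r s v w x y : ℕ) :
    (∑ μ ∈ range (j + 1), ((-1 : F) ^ μ * μ.factorial * j.choose μ * p.choose μ) •
       ∑ ν ∈ range (j + q - μ + 1),
         ((-1 : F) ^ ν * ν.factorial * (j + q - μ).choose ν * v.choose ν) •
           t2 F (i + p - μ + v - ν) (j + q - μ + w - ν) (k + r + μ + x + ν) (l + s + y))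
  = ∑ ν ∈ range (q + 1), ((-1 : F) ^ ν * ν.factorial * q.choose ν * v.choose ν) •
       ∑ μ ∈ range (j + 1),
         ((-1 : F) ^ μ * μ.factorial * j.choose μ * (p + v - ν).choose μ) •
           t2 F (i + (p + v - ν) - μ) (j + (q + w - ν) - μ) (k + (r + x + ν) + μ)
             (l + (s + y)) := by
  have hL : (∑ μ ∈ range (j + 1), ((-1 : F) ^ μ * μ.factorial * j.choose μ * p.choose μ) •
       ∑ ν ∈ range (j + q - μ + 1),
         ((-1 : F) ^ ν * ν.factorial * (j + q - μ).choose ν * v.choose ν) •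
           t2 F (i + p - μ + v - ν) (j + q - μ + w - ν) (k + r + μ + x + ν) (l + s + y))
      = ∑ t ∈ range (j + q + 1),
          ((-1 : F) ^ t * ((∑ α ∈ range (t+1),
              j.choose α * p.descFactorial α *
                ((j+q-α).choose (t-α) * v.descFactorial (t-α)) : ℕ) : F)) •
            t2 F (i+p+v-t) (j+q+w-t) (k+r+x+t) (l+s+y) := by
    calc (∑ μ ∈ range (j + 1), ((-1 : F) ^ μ * μ.factorial * j.choose μ * p.choose μ) •
       ∑ ν ∈ range (j + q - μ + 1),
         ((-1 : F) ^ ν * ν.factorial * (j + q - μ).choose ν * v.choose ν) •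
           t2 F (i + p - μ + v - ν) (j + q - μ + w - ν) (k + r + μ + x + ν) (l + s + y))
        = ∑ μ ∈ range (j + q + 1), ((-1 : F) ^ μ * μ.factorial * j.choose μ * p.choose μ) •
           ∑ ν ∈ range (j + q - μ + 1),
             ((-1 : F) ^ ν * ν.factorial * (j + q - μ).choose ν * v.choose ν) •
               t2 F (i + p - μ + v - ν) (j + q - μ + w - ν) (k + r + μ + x + ν) (l + s + y) := by
          refine Finset.sum_subset (range_subset_range.2 (by omega)) ?_
          intro μ hμ1 hμ2
          rw [mem_range, not_lt] at hμ2
          have h0 : j.choose μ = 0 := Nat.choose_eq_zero_of_lt (by omega)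
          simp [h0]
      _ = ∑ μ ∈ range (j + q + 1), ∑ ν ∈ range (j + q + 1 - μ),
            (((-1 : F) ^ μ * μ.factorial * j.choose μ * p.choose μ) *
             ((-1 : F) ^ ν * ν.factorial * (j + q - μ).choose ν * v.choose ν)) •
               t2 F (i + p - μ + v - ν) (j + q - μ + w - ν) (k + r + μ + x + ν) (l + s + y) := by
          refine sum_congr rfl fun μ hμ => ?_
          rw [mem_range] at hμ
          rw [show j + q - μ + 1 = j + q + 1 - μ from by omega, Finset.smul_sum]
          exact sum_congr rfl fun ν _ => smul_smul _ _ _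
      _ = ∑ t ∈ range (j + q + 1), ∑ α ∈ range (t + 1),
            (((-1 : F) ^ α * α.factorial * j.choose α * p.choose α) *
             ((-1 : F) ^ (t-α) * (t-α).factorial * (j + q - α).choose (t-α) * v.choose (t-α))) •
               t2 F (i + p - α + v - (t-α)) (j + q - α + w - (t-α)) (k + r + α + x + (t-α))
                 (l + s + y) :=
          (Finset.sum_range_diag_flip (j+q+1) (fun μ ν =>
            (((-1 : F) ^ μ * μ.factorial * j.choose μ * p.choose μ) *
             ((-1 : F) ^ ν * ν.factorial * (j + q - μ).choose ν * v.choose ν)) •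
               t2 F (i + p - μ + v - ν) (j + q - μ + w - ν) (k + r + μ + x + ν)
                 (l + s + y))).symm
      _ = ∑ t ∈ range (j + q + 1),
          ((-1 : F) ^ t * ((∑ α ∈ range (t+1),
              j.choose α * p.descFactorial α *
                ((j+q-α).choose (t-α) * v.descFactorial (t-α)) : ℕ) : F)) •
            t2 F (i+p+v-t) (j+q+w-t) (k+r+x+t) (l+s+y) := by
          refine sum_congr rfl fun t ht => ?_
          rw [Nat.cast_sum, Finset.mul_sum, Finset.sum_smul]
          refine sum_congr rfl fun α hα => ?_
          rw [mem_range, Nat.lt_succ_iff] at hα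
          rcases Nat.lt_or_ge j α with h1 | h1
          · have c1 : j.choose α = 0 := Nat.choose_eq_zero_of_lt h1
            simp [c1]
          rcases Nat.lt_or_ge p α with h2 | h2
          · have c1 : p.choose α = 0 := Nat.choose_eq_zero_of_lt h2
            have c2 : p.descFactorial α = 0 := Nat.descFactorial_eq_zero_iff_lt.2 h2
            simp [c1, c2]
          rcases Nat.lt_or_ge v (t-α) with h3 | h3
          · have c1 : v.choose (t-α) = 0 := Nat.choose_eq_zero_of_lt h3
            have c2 : v.descFactorial (t-α) = 0 := Nat.descFactorial_eq_zero_iff_lt.2 h3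
            simp [c1, c2]
          rcases Nat.lt_or_ge (j+q-α) (t-α) with h4 | h4
          · have c1 : (j+q-α).choose (t-α) = 0 := Nat.choose_eq_zero_of_lt h4
            simp [c1]
          have e1 : i + p - α + v - (t-α) = i+p+v-t := by omega
          have e2 : j + q - α + w - (t-α) = j+q+w-t := by omega
          have e3 : k + r + α + x + (t-α) = k+r+x+t := by omega
          rw [e1, e2, e3, Nat.descFactorial_eq_factorial_mul_choose,
            Nat.descFactorial_eq_factorial_mul_choose]
          congr 1
          have hsign : (-1:F)^α * (-1:F)^(t-α) = (-1:F)^t := by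
            rw [← pow_add]
            congr 1
            omega
          push_cast
          linear_combination (α.factorial * (j.choose α) * (p.choose α) * ((t-α).factorial) *
            ((j+q-α).choose (t-α)) * (v.choose (t-α)) : F) * hsign
  have hR : (∑ ν ∈ range (q + 1), ((-1 : F) ^ ν * ν.factorial * q.choose ν * v.choose ν) •
       ∑ μ ∈ range (j + 1),
         ((-1 : F) ^ μ * μ.factorial * j.choose μ * (p + v - ν).choose μ) •
           t2 F (i + (p + v - ν) - μ) (j + (q + w - ν) - μ) (k + (r + x + ν) + μ)
             (l + (s + y)))
      = ∑ t ∈ range (j + q + 1),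
          ((-1 : F) ^ t * ((∑ α ∈ range (t+1),
              q.choose α * v.descFactorial α *
                (j.choose (t-α) * (p+v-α).descFactorial (t-α)) : ℕ) : F)) •
            t2 F (i+p+v-t) (j+q+w-t) (k+r+x+t) (l+s+y) := by
    calc (∑ ν ∈ range (q + 1), ((-1 : F) ^ ν * ν.factorial * q.choose ν * v.choose ν) •
       ∑ μ ∈ range (j + 1),
         ((-1 : F) ^ μ * μ.factorial * j.choose μ * (p + v - ν).choose μ) •
           t2 F (i + (p + v - ν) - μ) (j + (q + w - ν) - μ) (k + (r + x + ν) + μ)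
             (l + (s + y)))
        = ∑ ν ∈ range (q + 1), ((-1 : F) ^ ν * ν.factorial * q.choose ν * v.choose ν) •
           ∑ μ ∈ range (j + q + 1 - ν),
             ((-1 : F) ^ μ * μ.factorial * j.choose μ * (p + v - ν).choose μ) •
               t2 F (i + (p + v - ν) - μ) (j + (q + w - ν) - μ) (k + (r + x + ν) + μ)
                 (l + (s + y)) := by
          refine sum_congr rfl fun ν hν => ?_
          rw [mem_range, Nat.lt_succ_iff] at hν
          congr 1
          refine Finset.sum_subset (range_subset_range.2 (by omega)) ?_
          intro μ hμ1 hμ2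
          rw [mem_range, not_lt] at hμ2
          have h0 : j.choose μ = 0 := Nat.choose_eq_zero_of_lt (by omega)
          simp [h0]
      _ = ∑ ν ∈ range (j + q + 1), ((-1 : F) ^ ν * ν.factorial * q.choose ν * v.choose ν) •
           ∑ μ ∈ range (j + q + 1 - ν),
             ((-1 : F) ^ μ * μ.factorial * j.choose μ * (p + v - ν).choose μ) •
               t2 F (i + (p + v - ν) - μ) (j + (q + w - ν) - μ) (k + (r + x + ν) + μ)
                 (l + (s + y)) := by
          refine Finset.sum_subset (range_subset_range.2 (by omega)) ?_
          intro ν hν1 hν2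
          rw [mem_range, not_lt] at hν2
          have h0 : q.choose ν = 0 := Nat.choose_eq_zero_of_lt (by omega)
          simp [h0]
      _ = ∑ ν ∈ range (j + q + 1), ∑ μ ∈ range (j + q + 1 - ν),
            (((-1 : F) ^ ν * ν.factorial * q.choose ν * v.choose ν) *
             ((-1 : F) ^ μ * μ.factorial * j.choose μ * (p + v - ν).choose μ)) •
               t2 F (i + (p + v - ν) - μ) (j + (q + w - ν) - μ) (k + (r + x + ν) + μ)
                 (l + (s + y)) := by
          refine sum_congr rfl fun ν hν => ?_
          rw [Finset.smul_sum]
          exact sum_congr rfl fun μ _ => smul_smul _ _ _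
      _ = ∑ t ∈ range (j + q + 1), ∑ α ∈ range (t + 1),
            (((-1 : F) ^ α * α.factorial * q.choose α * v.choose α) *
             ((-1 : F) ^ (t-α) * (t-α).factorial * j.choose (t-α) * (p + v - α).choose (t-α))) •
               t2 F (i + (p + v - α) - (t-α)) (j + (q + w - α) - (t-α)) (k + (r + x + α) + (t-α))
                 (l + (s + y)) :=
          (Finset.sum_range_diag_flip (j+q+1) (fun ν μ =>
            (((-1 : F) ^ ν * ν.factorial * q.choose ν * v.choose ν) *
             ((-1 : F) ^ μ * μ.factorial * j.choose μ * (p + v - ν).choose μ)) •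
               t2 F (i + (p + v - ν) - μ) (j + (q + w - ν) - μ) (k + (r + x + ν) + μ)
                 (l + (s + y)))).symm
      _ = ∑ t ∈ range (j + q + 1),
          ((-1 : F) ^ t * ((∑ α ∈ range (t+1),
              q.choose α * v.descFactorial α *
                (j.choose (t-α) * (p+v-α).descFactorial (t-α)) : ℕ) : F)) •
            t2 F (i+p+v-t) (j+q+w-t) (k+r+x+t) (l+s+y) := by
          refine sum_congr rfl fun t ht => ?_
          rw [Nat.cast_sum, Finset.mul_sum, Finset.sum_smul]
          refine sum_congr rfl fun α hα => ?_
          rw [mem_range, Nat.lt_succ_iff] at hα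
          rcases Nat.lt_or_ge q α with h1 | h1
          · have c1 : q.choose α = 0 := Nat.choose_eq_zero_of_lt h1
            simp [c1]
          rcases Nat.lt_or_ge v α with h2 | h2
          · have c1 : v.choose α = 0 := Nat.choose_eq_zero_of_lt h2
            have c2 : v.descFactorial α = 0 := Nat.descFactorial_eq_zero_iff_lt.2 h2
            simp [c1, c2]
          rcases Nat.lt_or_ge j (t-α) with h3 | h3
          · have c1 : j.choose (t-α) = 0 := Nat.choose_eq_zero_of_lt h3
            simp [c1]
          rcases Nat.lt_or_ge (p+v-α) (t-α) with h4 | h4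
          · have c1 : (p+v-α).choose (t-α) = 0 := Nat.choose_eq_zero_of_lt h4
            have c2 : (p+v-α).descFactorial (t-α) = 0 := Nat.descFactorial_eq_zero_iff_lt.2 h4
            simp [c1, c2]
          have e1 : i + (p + v - α) - (t-α) = i+p+v-t := by omega
          have e2 : j + (q + w - α) - (t-α) = j+q+w-t := by omega
          have e3 : k + (r + x + α) + (t-α) = k+r+x+t := by omega
          have e4 : l + (s + y) = l+s+y := by omega
          rw [e1, e2, e3, e4, Nat.descFactorial_eq_factorial_mul_choose,
            Nat.descFactorial_eq_factorial_mul_choose]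
          congr 1
          have hsign : (-1:F)^α * (-1:F)^(t-α) = (-1:F)^t := by
            rw [← pow_add]
            congr 1
            omega
          push_cast
          linear_combination (α.factorial * (q.choose α) * (v.choose α) * ((t-α).factorial) *
            (j.choose (t-α)) * ((p+v-α).choose (t-α)) : F) * hsign
  rw [hL, hR]
  refine sum_congr rfl fun t ht => ?_
  have hnat : (∑ α ∈ range (t+1),
        j.choose α * p.descFactorial α * ((j+q-α).choose (t-α) * v.descFactorial (t-α)))
      = ∑ α ∈ range (t+1),
        q.choose α * v.descFactorial α * (j.choose (t-α) * (p+v-α).descFactorial (t-α)) := by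
    have hrefl := Finset.sum_range_reflect (fun μ =>
      j.choose μ * (p+v-(t-μ)).descFactorial μ * (q.choose (t-μ) * v.descFactorial (t-μ))) (t+1)
    simp only [Nat.add_sub_cancel] at hrefl
    rw [keyNat j p q v t, ← hrefl]
    refine sum_congr rfl fun α hα => ?_
    rw [mem_range, Nat.lt_succ_iff] at hα
    rw [show t - (t - α) = α from by omega]
    ring
  rw [hnat]

lemma mulA_t2_t2 (a b c d a' b' c' d' : ℕ) :
    mulA F (t2 F a b c d) (t2 F a' b' c' d')
      = mulMon F (Sum.inl (a,b,c,d)) (Sum.inl (a',b',c',d')) := by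
  rw [t2, t2]
  exact mulA_single_single F _ _

lemma mulA_X_t2 (X : Mon →₀ F) (a b c d : ℕ) :
    mulA F X (t2 F a b c d) = rmul F (Sum.inl (a,b,c,d)) X := by
  rw [t2]
  exact mulA_single_right F _ _

lemma mulA_t2_X (X : Mon →₀ F) (a b c d : ℕ) :
    mulA F (t2 F a b c d) X = lmul F (Sum.inl (a,b,c,d)) X := by
  rw [t2]
  exact mulA_single_left F _ _

/-- Corollary `type2associator`: the associator of three type-2 basis monomials
of `A(𝕄)` is
`(aⁱbʲcᵏdˡ, aᵖb^q c^r dˢ, a^v b^w c^x d^y) = δ_{k0} δ_{r0} δ_{x0} (1/6)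
(iqy − isw − jpy + jsv + ℓpw − ℓqv) a^{i+p+v−1} b^{j+q+w−1} d^{ℓ+s+y−1} e`. -/
theorem stmt10 (h2 : ringChar F ≠ 2) (h3 : ringChar F ≠ 3)
    (i j k l p q r s v w x y : ℕ) :
    assocA F (t2 F i j k l) (t2 F p q r s) (t2 F v w x y) =
      if k = 0 ∧ r = 0 ∧ x = 0 then
        ((1 / 6 : F) * ((i : F) * q * y - (i : F) * s * w - (j : F) * p * y
            + (j : F) * s * v + (l : F) * p * w - (l : F) * q * v)) •
          t1 F (i + p + v - 1) (j + q + w - 1) (l + s + y - 1)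
      else 0 := by
  classical
  by_cases hk0 : k = 0
  · subst hk0
    by_cases hr0 : r = 0
    · subst hr0
      by_cases hx0 : x = 0
      · -- main branch k = r = x = 0
        subst hx0
        rw [if_pos ⟨rfl, rfl, rfl⟩]
        have h2' : (2:F) ≠ 0 := fun h =>
          h2 (CharP.ringChar_of_prime_eq_zero Nat.prime_two (by exact_mod_cast h))
        have h3' : (3:F) ≠ 0 := fun h =>
          h3 (CharP.ringChar_of_prime_eq_zero Nat.prime_three (by exact_mod_cast h))
        rw [assocA, mulA_t2_t2, mulA_t2_t2, mulA_X_t2, mulA_t2_X]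
        simp only [mulMon, map_add, map_sub, map_sum, map_smul, map_zero,
      rmul_t2, rmul_t1, lmul_t2, lmul_t1,
      zero_add, add_zero, Nat.sub_zero, sub_zero, true_and, and_true, and_false, false_and,
      if_true, if_false, eq_self_iff_true, one_ne_zero, zero_ne_one, and_self, pow_zero, pow_one,
      Nat.factorial_zero, Nat.factorial_one, Nat.choose_zero_right, Nat.choose_one_right,
      Nat.cast_one, one_mul, mul_one, one_smul, Nat.add_eq_zero, add_eq_left,
      smul_zero, zero_smul, smul_add, smul_sub, Finset.sum_add_distrib, Finset.sum_sub_distrib,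
      smul_ite, Finset.sum_ite_eq', mem_range, Nat.lt_succ_iff, Nat.zero_le, Nat.succ_ne_zero]
        have hT2 := t2assoc F i j 0 l p q 0 s v w 0 y
        simp only [zero_add, add_zero] at hT2
        rw [hT2, show i+(p+v)-1 = i+p+v-1 from by omega,
          show j+(q+w)-1 = j+q+w-1 from by omega,
          show l+(s+y)-1 = l+s+y-1 from by omega]
        have hA2 : ((i:F) * ↑j * ↑s / 6 - ↑i * ↑l * ↑q / 6 + ↑j * ↑l * ↑p / 2 + ↑j * ↑p * ↑s / 3
              - ↑l * ↑p * ↑q / 3 : F) •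
              t1 F (i + p - 1 + v) (j + q - 1 + w) (l + s - 1 + y)
            = ((i:F) * ↑j * ↑s / 6 - ↑i * ↑l * ↑q / 6 + ↑j * ↑l * ↑p / 2 + ↑j * ↑p * ↑s / 3
              - ↑l * ↑p * ↑q / 3 : F) •
              t1 F (i + p + v - 1) (j + q + w - 1) (l + s + y - 1) := by
          by_cases hd : 1 ≤ i + p ∧ 1 ≤ j + q ∧ 1 ≤ l + s
          · rw [show i+p-1+v = i+p+v-1 from by omega, show j+q-1+w = j+q+w-1 from by omega,
              show l+s-1+y = l+s+y-1 from by omega]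
          · have hd' : (i = 0 ∧ p = 0) ∨ (j = 0 ∧ q = 0) ∨ (l = 0 ∧ s = 0) := by omega
            have hc : ((i:F) * ↑j * ↑s / 6 - ↑i * ↑l * ↑q / 6 + ↑j * ↑l * ↑p / 2
                + ↑j * ↑p * ↑s / 3 - ↑l * ↑p * ↑q / 3 : F) = 0 := by
              rcases hd' with ⟨ha, hb⟩ | ⟨ha, hb⟩ | ⟨ha, hb⟩ <;> subst ha <;> subst hb <;>
                norm_num
            rw [hc, zero_smul, zero_smul]
        have hC : (if 1 ≤ q then ((-1 : F) * ↑q * ↑v) • ((l:F) •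
              t1 F (i + (p + v - 1)) (j + (q + w - 1)) (l + s + y - 1)) else 0)
            = ((-1 : F) * ↑q * ↑v * ↑l) •
                t1 F (i + p + v - 1) (j + q + w - 1) (l + s + y - 1) := by
          by_cases hq : 1 ≤ q
          · rw [if_pos hq]
            by_cases hv : v = 0
            · subst hv
              norm_num
            · rw [show i + (p + v - 1) = i+p+v-1 from by omega,
                show j + (q + w - 1) = j+q+w-1 from by omega, smul_smul]
          · rw [if_neg hq]
            have hq0 : q = 0 := by omega
            subst hq0
            norm_num
        have hB4 : ((p:F) * ↑q * ↑y / 6 - ↑p * ↑s * ↑w / 6 + ↑q * ↑s * ↑v / 2 + ↑q * ↑v * ↑y / 3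
              - ↑s * ↑v * ↑w / 3 : F) •
              t1 F (i + (p + v - 1)) (j + (q + w - 1)) (l + (s + y - 1))
            = ((p:F) * ↑q * ↑y / 6 - ↑p * ↑s * ↑w / 6 + ↑q * ↑s * ↑v / 2 + ↑q * ↑v * ↑y / 3
              - ↑s * ↑v * ↑w / 3 : F) •
              t1 F (i + p + v - 1) (j + q + w - 1) (l + s + y - 1) := by
          by_cases hd : 1 ≤ p + v ∧ 1 ≤ q + w ∧ 1 ≤ s + y
          · rw [show i + (p + v - 1) = i+p+v-1 from by omega,
              show j + (q + w - 1) = j+q+w-1 from by omega,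
              show l + (s + y - 1) = l+s+y-1 from by omega]
          · have hd' : (p = 0 ∧ v = 0) ∨ (q = 0 ∧ w = 0) ∨ (s = 0 ∧ y = 0) := by omega
            have hc : ((p:F) * ↑q * ↑y / 6 - ↑p * ↑s * ↑w / 6 + ↑q * ↑s * ↑v / 2
                + ↑q * ↑v * ↑y / 3 - ↑s * ↑v * ↑w / 3 : F) = 0 := by
              rcases hd' with ⟨ha, hb⟩ | ⟨ha, hb⟩ | ⟨ha, hb⟩ <;> subst ha <;> subst hb <;>
                norm_num
            rw [hc, zero_smul, zero_smul]
        rw [hA2, hC, hB4]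
        have h6' : (6:F) ≠ 0 := by
          have h63 : (6:F) = 2*3 := by norm_num
          rw [h63]
          exact mul_ne_zero h2' h3'
        have h66 : (6:F) * 6⁻¹ = 1 := mul_inv_cancel₀ h6'
        have h2i : (2:F)⁻¹ = 3 * 6⁻¹ := inv_eq_of_mul_eq_one_right (by
          calc (2:F) * (3 * 6⁻¹) = 6 * 6⁻¹ := by ring
            _ = 1 := h66)
        have h3i : (3:F)⁻¹ = 2 * 6⁻¹ := inv_eq_of_mul_eq_one_right (by
          calc (3:F) * (2 * 6⁻¹) = 6 * 6⁻¹ := by ring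
            _ = 1 := h66)
        match_scalars <;>
          first
            | ring1
            | (simp only [div_eq_mul_inv]
               rw [h2i, h3i]
               linear_combination ((q:F) * l * v) * h66)
      · -- k = r = 0, x ≠ 0
        rw [if_neg (by simp [hx0])]
        by_cases hx1 : x = 1
        · subst hx1
          rw [assocA, mulA_t2_t2, mulA_t2_t2, mulA_X_t2, mulA_t2_X]
          simp only [mulMon, map_add, map_sub, map_sum, map_smul, map_zero,
      rmul_t2, rmul_t1, lmul_t2, lmul_t1,
      zero_add, add_zero, Nat.sub_zero, sub_zero, true_and, and_true, and_false, false_and,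
      if_true, if_false, eq_self_iff_true, one_ne_zero, zero_ne_one, and_self, pow_zero, pow_one,
      Nat.factorial_zero, Nat.factorial_one, Nat.choose_zero_right, Nat.choose_one_right,
      Nat.cast_one, one_mul, mul_one, one_smul, Nat.add_eq_zero, add_eq_left,
      smul_zero, zero_smul, smul_add, smul_sub, Finset.sum_add_distrib, Finset.sum_sub_distrib,
      smul_ite, Finset.sum_ite_eq', mem_range, Nat.lt_succ_iff, Nat.zero_le, Nat.succ_ne_zero]
          have hT2 := t2assoc F i j 0 l p q 0 s v w 1 y
          simp only [zero_add, add_zero] at hT2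
          rw [hT2, show i+(p+v) = i+p+v from by omega, show j+(q+w) = j+q+w from by omega,
            show l+(s+y)-1 = l+s+y-1 from by omega]
          have hs : (s:F) • t1 F (i+p+v) (j+q+w) (l+(s+y-1))
              = (s:F) • t1 F (i+p+v) (j+q+w) (l+s+y-1) := by
            by_cases hsy : 1 ≤ s + y
            · rw [show l+(s+y-1) = l+s+y-1 from by omega]
            · have hs0 : s = 0 := by omega
              subst hs0
              norm_num
          rw [hs]
          match_scalars <;> ring1
        · rw [assocA, mulA_t2_t2, mulA_t2_t2, mulA_X_t2, mulA_t2_X]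
          simp only [hx0, hx1,
            (show ∀ m:ℕ, ¬(x + m = 1) from fun m => by omega), mulMon, map_add, map_sub, map_sum, map_smul, map_zero,
      rmul_t2, rmul_t1, lmul_t2, lmul_t1,
      zero_add, add_zero, Nat.sub_zero, sub_zero, true_and, and_true, and_false, false_and,
      if_true, if_false, eq_self_iff_true, one_ne_zero, zero_ne_one, and_self, pow_zero, pow_one,
      Nat.factorial_zero, Nat.factorial_one, Nat.choose_zero_right, Nat.choose_one_right,
      Nat.cast_one, one_mul, mul_one, one_smul, Nat.add_eq_zero, add_eq_left,
      smul_zero, zero_smul, smul_add, smul_sub, Finset.sum_add_distrib, Finset.sum_sub_distrib,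
      smul_ite, Finset.sum_ite_eq', mem_range, Nat.lt_succ_iff, Nat.zero_le, Nat.succ_ne_zero]
          have hT2 := t2assoc F i j 0 l p q 0 s v w x y
          simp only [zero_add, add_zero] at hT2
          rw [hT2, sub_self]
    · -- k = 0, r ≠ 0
      rw [if_neg (by simp [hr0])]
      by_cases hr1 : r = 1
      · subst hr1
        by_cases hx0 : x = 0
        · subst hx0
          rw [assocA, mulA_t2_t2, mulA_t2_t2, mulA_X_t2, mulA_t2_X]
          simp only [mulMon, map_add, map_sub, map_sum, map_smul, map_zero,
      rmul_t2, rmul_t1, lmul_t2, lmul_t1,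
      zero_add, add_zero, Nat.sub_zero, sub_zero, true_and, and_true, and_false, false_and,
      if_true, if_false, eq_self_iff_true, one_ne_zero, zero_ne_one, and_self, pow_zero, pow_one,
      Nat.factorial_zero, Nat.factorial_one, Nat.choose_zero_right, Nat.choose_one_right,
      Nat.cast_one, one_mul, mul_one, one_smul, Nat.add_eq_zero, add_eq_left,
      smul_zero, zero_smul, smul_add, smul_sub, Finset.sum_add_distrib, Finset.sum_sub_distrib,
      smul_ite, Finset.sum_ite_eq', mem_range, Nat.lt_succ_iff, Nat.zero_le, Nat.succ_ne_zero]
          have hT2 := t2assoc F i j 0 l p q 1 s v w 0 y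
          simp only [zero_add, add_zero] at hT2
          rw [hT2, show i+(p+v) = i+p+v from by omega, show j+(q+w) = j+q+w from by omega,
            show l+(s+y)-1 = l+s+y-1 from by omega]
          have hl : (l:F) • t1 F (i+p+v) (j+q+w) (l+s-1+y)
              = (l:F) • t1 F (i+p+v) (j+q+w) (l+s+y-1) := by
            by_cases hl1 : 1 ≤ l
            · rw [show l+s-1+y = l+s+y-1 from by omega]
            · have hl0 : l = 0 := by omega
              subst hl0
              norm_num
          rw [hl]
          match_scalars <;> ring1
        · rw [assocA, mulA_t2_t2, mulA_t2_t2, mulA_X_t2, mulA_t2_X]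
          simp only [hx0,
            (show ∀ m:ℕ, ¬(1 + x + m = 1) from fun m => by omega), mulMon, map_add, map_sub, map_sum, map_smul, map_zero,
      rmul_t2, rmul_t1, lmul_t2, lmul_t1,
      zero_add, add_zero, Nat.sub_zero, sub_zero, true_and, and_true, and_false, false_and,
      if_true, if_false, eq_self_iff_true, one_ne_zero, zero_ne_one, and_self, pow_zero, pow_one,
      Nat.factorial_zero, Nat.factorial_one, Nat.choose_zero_right, Nat.choose_one_right,
      Nat.cast_one, one_mul, mul_one, one_smul, Nat.add_eq_zero, add_eq_left,
      smul_zero, zero_smul, smul_add, smul_sub, Finset.sum_add_distrib, Finset.sum_sub_distrib,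
      smul_ite, Finset.sum_ite_eq', mem_range, Nat.lt_succ_iff, Nat.zero_le, Nat.succ_ne_zero]
          have hT2 := t2assoc F i j 0 l p q 1 s v w x y
          simp only [zero_add, add_zero] at hT2
          rw [hT2, sub_self]
      · rw [assocA, mulA_t2_t2, mulA_t2_t2, mulA_X_t2, mulA_t2_X]
        simp only [hr0, hr1,
          (show ∀ m:ℕ, ¬(r + m = 0) from fun m => by omega),
          (show ∀ m:ℕ, ¬(r + x + m = 0) from fun m => by omega),
          (show ∀ m:ℕ, ¬(r + x + m = 1) from fun m => by omega), mulMon, map_add, map_sub, map_sum, map_smul, map_zero,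
      rmul_t2, rmul_t1, lmul_t2, lmul_t1,
      zero_add, add_zero, Nat.sub_zero, sub_zero, true_and, and_true, and_false, false_and,
      if_true, if_false, eq_self_iff_true, one_ne_zero, zero_ne_one, and_self, pow_zero, pow_one,
      Nat.factorial_zero, Nat.factorial_one, Nat.choose_zero_right, Nat.choose_one_right,
      Nat.cast_one, one_mul, mul_one, one_smul, Nat.add_eq_zero, add_eq_left,
      smul_zero, zero_smul, smul_add, smul_sub, Finset.sum_add_distrib, Finset.sum_sub_distrib,
      smul_ite, Finset.sum_ite_eq', mem_range, Nat.lt_succ_iff, Nat.zero_le, Nat.succ_ne_zero]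
        have hT2 := t2assoc F i j 0 l p q r s v w x y
        simp only [zero_add, add_zero] at hT2
        rw [hT2, sub_self]
  · -- k ≠ 0
    rw [if_neg (by simp [hk0])]
    rw [assocA, mulA_t2_t2, mulA_t2_t2, mulA_X_t2, mulA_t2_X]
    simp only [apply_ite (⇑(lmul F (Sum.inl (i,j,k,l)))), hk0,
      (show ∀ m:ℕ, ¬(k + r + m = 0) from fun m => by omega), ite_self, mulMon, map_add, map_sub, map_sum, map_smul, map_zero,
      rmul_t2, rmul_t1, lmul_t2, lmul_t1,
      zero_add, add_zero, Nat.sub_zero, sub_zero, true_and, and_true, and_false, false_and,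
      if_true, if_false, eq_self_iff_true, one_ne_zero, zero_ne_one, and_self, pow_zero, pow_one,
      Nat.factorial_zero, Nat.factorial_one, Nat.choose_zero_right, Nat.choose_one_right,
      Nat.cast_one, one_mul, mul_one, one_smul, Nat.add_eq_zero, add_eq_left,
      smul_zero, zero_smul, smul_add, smul_sub, Finset.sum_add_distrib, Finset.sum_sub_distrib,
      smul_ite, Finset.sum_ite_eq', mem_range, Nat.lt_succ_iff, Nat.zero_le, Nat.succ_ne_zero]
    have hT2 := t2assoc F i j k l p q r s v w x y
    rw [hT2, sub_self]
end
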